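/- arXiv:1609.00896 — 6 statements merged into one kernel-verified Lean document; each statement's English description precedes it below -/
import Mathlib

section
/- For any two tones (v,f) and (v',f') with v,v' complex and f,f' real, and any T>0, the quantity dist((v,f),(v',f'))^2 := (1/T)∫_0^T |v e^{2πift} - v' e^{2πif't}|^2 dt satisfies dist((v,f),(v',f'))^2 ≍ (|v|^2+|v'|^2)·min(1, T^2|f-f'|^2) + |v-v'|^2, i.e., each side is bounded by a universal constant times the other. -/
open MeasureTheory Real

set_option maxHeartbeats 1000000

/-- Tone distance squared: `(1/T) ∫_0^T |v e^{2πift} - v' e^{2πif't}|² dt`. -/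
noncomputable def toneDistSq (v v' : ℂ) (f f' T : ℝ) : ℝ :=
  (1 / T) * ∫ t in (0:ℝ)..T,
    ‖v * Complex.exp (2 * π * f * t * Complex.I)
      - v' * Complex.exp (2 * π * f' * t * Complex.I)‖ ^ 2

lemma sin_le'' {x : ℝ} (hx : 0 ≤ x) : Real.sin x ≤ x := by
  rcases eq_or_lt_of_le hx with h | h
  · simp [← h]
  · exact (Real.sin_lt h).le

lemma cos_half_sq (x : ℝ) : Real.cos x = 1 - 2 * Real.sin (x/2) ^ 2 := by
  have := Real.sin_sq_eq_half_sub (x/2)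
  rw [mul_div_cancel₀] at this
  · linarith
  · norm_num

-- lower bound, nonneg case
lemma key_low_aux {x : ℝ} (hx : 0 ≤ x) :
    x^2 * min 1 (x^2) ≤ 20 * (x^2 - 2 + 2*Real.cos x) := by
  rw [cos_half_sq x]
  set u := x/2 with hu
  have hxu : x = 2*u := by rw [hu]; ring
  have hu0 : 0 ≤ u := by positivity
  have hu3 : 0 ≤ u^3 := by positivity
  rcases le_or_gt x 1 with h1 | h1
  · -- x ≤ 1, u ≤ 1/2
    have hu1 : u ≤ 1/2 := by rw [hu]; linarith
    have hb := Real.sin_bound (x := u) (by rw [abs_of_nonneg hu0]; linarith)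
    rw [abs_of_nonneg hu0] at hb
    have hs0 : 0 ≤ Real.sin u := Real.sin_nonneg_of_nonneg_of_le_pi hu0 (by linarith [Real.pi_gt_three])
    have hmin : min 1 (x^2) ≤ x^2 := min_le_right _ _
    have hb1 : Real.sin u ≤ u - u^3/6 + u^4*(5/96) := by cases abs_le.1 hb; nlinarith [mul_nonneg (pow_nonneg hu0 4) (by linarith : (0:ℝ) ≤ 1 - u)]
    have hb2 : u - u^3/6 - u^4*(5/96) ≤ Real.sin u := by cases abs_le.1 hb; nlinarith [mul_nonneg (pow_nonneg hu0 4) (by linarith : (0:ℝ) ≤ 1 - u)]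
    have hu43 : u^4 ≤ u^3/2 := by nlinarith [hu3, hu1]
    have hu3u : u^3 ≤ u/4 := by
      nlinarith [mul_nonneg (mul_nonneg hu0 (by linarith : (0:ℝ) ≤ 1/2 - u))
        (by linarith : (0:ℝ) ≤ u + 1/2)]
    have hu4u : u^4 ≤ u/8 := by nlinarith [hu3u, hu43]
    have hA : (9:ℝ)/64*u^3 ≤ u - Real.sin u := by nlinarith [hb1, hu43]
    have hB : (19:ℝ)/10*u ≤ u + Real.sin u := by nlinarith [hb2, hu3u, hu4u]
    have hprod : ((9:ℝ)/64*u^3) * ((19:ℝ)/10*u) ≤ (u - Real.sin u)*(u + Real.sin u) :=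
      mul_le_mul hA hB (by positivity) (by linarith)
    have key : 16 * u^4 ≤ 80 * (u^2 - Real.sin u ^2) := by nlinarith [hprod]
    have h5 : x^2 * min 1 (x^2) ≤ x^2 * x^2 :=
      mul_le_mul_of_nonneg_left hmin (sq_nonneg x)
    have h6 : x^2*x^2 = 16*u^4 := by rw [hxu]; ring
    have h7 : 20 * (x^2 - 2 + 2*(1 - 2*Real.sin u ^2)) = 80*(u^2 - Real.sin u^2) := by
      rw [hxu]; ring
    linarith
  · rcases le_or_gt x (5/2) with h2 | h2
    · -- 1 ≤ x ≤ 5/2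
      have hmin : min 1 (x^2) ≤ 1 := min_le_left _ _
      have hs0 : 0 ≤ Real.sin u := Real.sin_nonneg_of_nonneg_of_le_pi hu0
        (by rw [hu]; linarith [Real.pi_gt_three])
      have hu2x : u^2 = x^2/4 := by rw [hxu]; ring
      have hgoal : Real.sin u ^ 2 ≤ (19/20) * u^2 → x^2 * min 1 (x^2) ≤
          20 * (x^2 - 2 + 2*(1 - 2*Real.sin u ^2)) := by
        intro hs
        have h5 : x^2 * min 1 (x^2) ≤ x^2 := mul_le_of_le_one_right (sq_nonneg x) hmin
        linarith [hs, hu2x, h5]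
      apply hgoal
      rcases le_or_gt u 1 with h3 | h3
      · -- 1/2 ≤ u ≤ 1
        have hu1 : 1/2 ≤ u := by rw [hu]; linarith
        have hb := Real.sin_bound (x := u) (by rw [abs_of_nonneg hu0]; linarith)
        rw [abs_of_nonneg hu0] at hb
        have hb1 : Real.sin u ≤ u - u^3/6 + u^4*(5/96) := by cases abs_le.1 hb; nlinarith [mul_nonneg (pow_nonneg hu0 4) (by linarith : (0:ℝ) ≤ 1 - u)]
        have h43 : u^4 ≤ u^3 := by nlinarith [hu3]
        have h1s : Real.sin u ≤ u - 11/96*u^3 := by linarith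
        have hu3le : u^3 ≤ u := by nlinarith [mul_nonneg hu0 (by nlinarith : (0:ℝ) ≤ 1 - u^2)]
        have hpos : 0 ≤ u - 11/96*u^3 := by linarith [hu3le, hu0]
        have hsq : Real.sin u^2 ≤ (u - 11/96*u^3)^2 := by
          have := pow_le_pow_left₀ hs0 h1s 2
          simpa using this
        have h34 : u^6 ≤ u^4 := by nlinarith [sq_nonneg (u^2), hu0, h3, hu1]
        have h24 : u^2/4 ≤ u^4 := by nlinarith [hu1, sq_nonneg u]
        nlinarith [hsq, h34, h24]
      · -- 1 ≤ u ≤ 5/4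
        have hu54 : u ≤ 5/4 := by rw [hu]; linarith
        have hsin1 : Real.sin 1 ≤ 85/96 := by
          have hb := Real.sin_bound (x := (1:ℝ)) (by norm_num)
          rw [abs_of_nonneg (by norm_num : (0:ℝ) ≤ 1)] at hb
          have := (abs_le.1 hb).2
          norm_num at this ⊢
          linarith
        have hlip : Real.sin u ≤ Real.sin 1 + (u - 1) := by
          have hss := Real.sin_sub_sin u 1
          have hp0 : 0 ≤ Real.sin ((u-1)/2) := Real.sin_nonneg_of_nonneg_of_le_pi
            (by linarith) (by linarith [Real.pi_gt_three])
          have hp1 : Real.sin ((u-1)/2) ≤ (u-1)/2 := sin_le'' (by linarith)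
          have hq : Real.cos ((u+1)/2) ≤ 1 := Real.cos_le_one _
          nlinarith [hp0, hp1, hq]
        have h1s : Real.sin u ≤ u - 11/96 := by linarith
        have hpos : (0:ℝ) ≤ u - 11/96 := by linarith
        have hsq : Real.sin u^2 ≤ (u - 11/96)^2 := by
          have := pow_le_pow_left₀ hs0 h1s 2
          simpa using this
        nlinarith [hsq, hu54, h3]
    · -- x ≥ 5/2
      have hmin : min 1 (x^2) ≤ 1 := min_le_left _ _
      have hsle : Real.sin u ^ 2 ≤ 1 := Real.sin_sq_le_one u
      nlinarith [sq_nonneg x]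

lemma key_low (x : ℝ) : x^2 * min 1 (x^2) ≤ 20 * (x^2 - 2 + 2*Real.cos x) := by
  rcases le_or_gt 0 x with h | h
  · exact key_low_aux h
  · have := key_low_aux (x := -x) (by linarith)
    simpa using this


-- |g| ≤ 1
lemma two_sub_cos (x : ℝ) : x^2 - 2 + 2*Real.cos x ≥ 0 := by
  have := Real.one_sub_sq_div_two_le_cos (x := x)
  linarith

-- small x quartic upper bound
lemma key_up_small {x : ℝ} (h : x^2 ≤ 1) : x^2 - 2 + 2*Real.cos x ≤ x^4/8 := by
  have habs : |x| ≤ 1 := abs_le_one_iff_mul_self_le_one.mpr (by nlinarith)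
  have hb := Real.cos_bound habs
  have h1 := (abs_le.1 hb).2
  have h4 : |x|^4 = x^4 := by
    rw [← abs_pow]; exact abs_of_nonneg (by positivity)
  rw [h4] at h1
  nlinarith [h1, sq_nonneg x, sq_nonneg (x^2)]

lemma key_R3_aux {x : ℝ} (hx : 0 ≤ x) :
    x^2 - 2*x*Real.sin x + 2 - 2*Real.cos x ≤ 160 * (x^2 - 2 + 2*Real.cos x) := by
  rcases le_or_gt x 1 with h1 | h1
  · have hb := Real.sin_bound (x := x) (by rw [abs_of_nonneg hx]; linarith)
    rw [abs_of_nonneg hx] at hb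
    have hb2 : x - x^3/6 - x^4*(5/96) ≤ Real.sin x := by cases abs_le.1 hb; nlinarith [mul_nonneg (pow_nonneg hx 4) (by linarith : (0:ℝ) ≤ 1 - x)]
    have hc : 1 - x^2/2 ≤ Real.cos x := Real.one_sub_sq_div_two_le_cos
    have hkl := key_low x
    have hminx : min 1 (x^2) = x^2 := min_eq_right (by nlinarith)
    rw [hminx] at hkl
    -- LHS ≤ x^4/3 + 10 x^5/96 ≤ x^4/2 ; RHS ≥ 8 x^4
    have hmul : 2*x*(x - x^3/6 - x^4*(5/96)) ≤ 2*x*Real.sin x := by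
      apply mul_le_mul_of_nonneg_left hb2 (by linarith)
    have hx5 : x^5 ≤ x^4 := by
      have := mul_nonneg (pow_nonneg hx 4) (by linarith : (0:ℝ) ≤ 1 - x)
      nlinarith [this]
    nlinarith [hmul, hc, hkl, hx5, sq_nonneg (x^2)]
  · have hs : -1 ≤ Real.sin x := Real.neg_one_le_sin x
    have hc : -1 ≤ Real.cos x := Real.neg_one_le_cos x
    have hkl := key_low x
    have hminx : min 1 (x^2) = 1 := min_eq_left (by nlinarith)
    rw [hminx, mul_one] at hkl
    have hms : 2*x*Real.sin x ≥ -(2*x) := by nlinarith [hs, hx]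
    nlinarith [hkl, hms, hc]

lemma key_R3 (x : ℝ) :
    x^2 - 2*x*Real.sin x + 2 - 2*Real.cos x ≤ 160 * (x^2 - 2 + 2*Real.cos x) := by
  rcases le_or_gt 0 x with h | h
  · exact key_R3_aux h
  · have := key_R3_aux (x := -x) (by linarith)
    simpa using this

lemma norm_sq_eq_normSq (z : ℂ) : ‖z‖^2 = Complex.normSq z := by
  rw [Complex.sq_norm]

lemma norm_tone_pointwise (v v' : ℂ) (a b : ℝ) :
    ‖v * Complex.exp (a * Complex.I) - v' * Complex.exp (b * Complex.I)‖^2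
      = ‖v‖^2 + ‖v'‖^2
        - 2*(v * (starRingEnd ℂ) v' * Complex.exp (((a - b : ℝ)) * Complex.I)).re := by
  have e1 : Complex.normSq (Complex.exp (a * Complex.I)) = 1 := by
    rw [Complex.normSq_eq_norm_sq, Complex.norm_exp_ofReal_mul_I]; norm_num
  have e2 : Complex.normSq (Complex.exp (b * Complex.I)) = 1 := by
    rw [Complex.normSq_eq_norm_sq, Complex.norm_exp_ofReal_mul_I]; norm_num
  have hconj : (starRingEnd ℂ) (Complex.exp (b * Complex.I))
      = Complex.exp (-(b * Complex.I)) := by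
    rw [← Complex.exp_conj]
    congr 1
    simp [Complex.conj_I]
  have hmul : Complex.exp (a * Complex.I) * Complex.exp (-(b * Complex.I))
      = Complex.exp (((a - b : ℝ)) * Complex.I) := by
    rw [← Complex.exp_add]
    congr 1
    push_cast
    ring
  rw [norm_sq_eq_normSq, norm_sq_eq_normSq, norm_sq_eq_normSq, Complex.normSq_sub]
  rw [Complex.normSq_mul, Complex.normSq_mul, e1, e2, map_mul, hconj]
  rw [show v * Complex.exp (a * Complex.I) *
        ((starRingEnd ℂ) v' * Complex.exp (-(b * Complex.I)))
      = v * (starRingEnd ℂ) v' *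
        (Complex.exp (a * Complex.I) * Complex.exp (-(b * Complex.I))) by ring, hmul]
  ring

lemma tone_integral (v v' : ℂ) (f f' T : ℝ) :
    (∫ t in (0:ℝ)..T,
      ‖v * Complex.exp (2 * ↑π * ↑f * ↑t * Complex.I)
        - v' * Complex.exp (2 * ↑π * ↑f' * ↑t * Complex.I)‖ ^ 2)
    = T * (‖v‖^2 + ‖v'‖^2)
      - 2 * (v * (starRingEnd ℂ) v'
          * ∫ t in (0:ℝ)..T, Complex.exp (((2*π*(f-f')*t : ℝ)) * Complex.I)).re := by
  have hpt : ∀ t : ℝ,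
      ‖v * Complex.exp (2 * ↑π * ↑f * ↑t * Complex.I)
        - v' * Complex.exp (2 * ↑π * ↑f' * ↑t * Complex.I)‖ ^ 2
      = ‖v‖^2 + ‖v'‖^2
        - 2*(v * (starRingEnd ℂ) v' * Complex.exp (((2*π*(f-f')*t : ℝ)) * Complex.I)).re := by
    intro t
    have h := norm_tone_pointwise v v' (2*π*f*t) (2*π*f'*t)
    rw [show ((2*π*f*t : ℝ) : ℂ) = 2 * ↑π * ↑f * ↑t by push_cast; ring,
        show ((2*π*f'*t : ℝ) : ℂ) = 2 * ↑π * ↑f' * ↑t by push_cast; ring,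
        show (2*π*f*t) - (2*π*f'*t) = 2*π*(f-f')*t by ring] at h
    exact h
  simp only [hpt]
  have hF : Continuous fun t : ℝ => Complex.exp (((2*π*(f-f')*t : ℝ)) * Complex.I) := by
    fun_prop
  have hFK : Continuous fun t : ℝ =>
      v * (starRingEnd ℂ) v' * Complex.exp (((2*π*(f-f')*t : ℝ)) * Complex.I) :=
    continuous_const.mul hF
  have hInt1 : IntervalIntegrable (fun _ : ℝ => ‖v‖^2 + ‖v'‖^2) volume 0 T :=
    intervalIntegrable_const
  have hInt2 : IntervalIntegrable (fun t : ℝ =>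
      2*(v * (starRingEnd ℂ) v' * Complex.exp (((2*π*(f-f')*t : ℝ)) * Complex.I)).re)
      volume 0 T :=
    (continuous_const.mul (Complex.continuous_re.comp hFK)).intervalIntegrable 0 T
  rw [intervalIntegral.integral_sub hInt1 hInt2, intervalIntegral.integral_const]
  rw [intervalIntegral.integral_const_mul]
  have hre : (∫ t in (0:ℝ)..T,
      (v * (starRingEnd ℂ) v' * Complex.exp (((2*π*(f-f')*t : ℝ)) * Complex.I)).re)
      = (∫ t in (0:ℝ)..T,
        v * (starRingEnd ℂ) v' * Complex.exp (((2*π*(f-f')*t : ℝ)) * Complex.I)).re := by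
    have := Complex.reCLM.intervalIntegral_comp_comm
      (hFK.intervalIntegrable 0 T (μ := volume))
    simpa only [Complex.reCLM_apply] using this
  rw [hre, intervalIntegral.integral_const_mul]
  simp [smul_eq_mul]

-- algebraic identities, valid for any complex g
lemma idI1 (v v' g : ℂ) :
    Complex.normSq (v*g - v') = Complex.normSq v * Complex.normSq g + Complex.normSq v'
      - 2*(v * (starRingEnd ℂ) v' * g).re := by
  simp only [Complex.normSq_apply, Complex.mul_re, Complex.mul_im, Complex.sub_re,
    Complex.sub_im, Complex.conj_re, Complex.conj_im]
  ring

lemma idI2 (v v' g : ℂ) :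
    Complex.normSq (v' * (starRingEnd ℂ) g - v)
      = Complex.normSq v' * Complex.normSq g + Complex.normSq v
        - 2*(v * (starRingEnd ℂ) v' * g).re := by
  simp only [Complex.normSq_apply, Complex.mul_re, Complex.mul_im, Complex.sub_re,
    Complex.sub_im, Complex.conj_re, Complex.conj_im]
  ring

lemma norm_sq_eq_normSq' (z : ℂ) : ‖z‖^2 = Complex.normSq z := by
  rw [Complex.sq_norm]

lemma tri' (p q : ℂ) : Complex.normSq (p + q) ≤ 2*Complex.normSq p + 2*Complex.normSq q := by
  have h := norm_add_le p q
  rw [← norm_sq_eq_normSq', ← norm_sq_eq_normSq', ← norm_sq_eq_normSq']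
  nlinarith [norm_nonneg (p+q), norm_nonneg p, norm_nonneg q, sq_nonneg (‖p‖-‖q‖)]

lemma tri1 (v v' g : ℂ) :
    Complex.normSq (v - v') ≤ 2*Complex.normSq (v*g - v')
      + 2*Complex.normSq v * Complex.normSq (1 - g) := by
  have hdec : v - v' = (v*g - v') + v*(1-g) := by ring
  have h := tri' (v*g - v') (v*(1-g))
  rw [← hdec, Complex.normSq_mul] at h
  linarith

lemma tri2 (v v' g : ℂ) :
    Complex.normSq (v*g - v') ≤ 2*Complex.normSq (v - v')
      + 2*Complex.normSq v * Complex.normSq (1 - g) := by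
  have hdec : v*g - v' = (v - v') + (-(v*(1-g))) := by ring
  have h := tri' (v - v') (-(v*(1-g)))
  rw [← hdec, Complex.normSq_neg, Complex.normSq_mul] at h
  linarith

-- g facts
lemma g_normSq {x : ℝ} (hx : x ≠ 0) :
    Complex.normSq ((Complex.exp (x * Complex.I) - 1)/(x * Complex.I))
      = (2 - 2*Real.cos x)/x^2 := by
  rw [map_div₀ Complex.normSq]
  congr 1
  · have hre : (Complex.exp (x * Complex.I)).re = Real.cos x := Complex.exp_ofReal_mul_I_re x
    have him : (Complex.exp (x * Complex.I)).im = Real.sin x := Complex.exp_ofReal_mul_I_im x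
    rw [Complex.normSq_apply]
    simp only [Complex.sub_re, Complex.sub_im, Complex.one_re, Complex.one_im, hre, him]
    nlinarith [Real.sin_sq_add_cos_sq x]
  · simp [Complex.normSq_mul, Complex.normSq_I, Complex.normSq_ofReal]
    ring

lemma g_one_sub_normSq {x : ℝ} (hx : x ≠ 0) :
    Complex.normSq (1 - (Complex.exp (x * Complex.I) - 1)/(x * Complex.I))
      = (x^2 - 2*x*Real.sin x + 2 - 2*Real.cos x)/x^2 := by
  have hxI : (x : ℂ) * Complex.I ≠ 0 := by
    simp [Complex.ext_iff, hx]
  have h1 : 1 - (Complex.exp (x * Complex.I) - 1)/(x * Complex.I)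
      = ((x * Complex.I + 1) - Complex.exp (x * Complex.I))/(x * Complex.I) := by
    rw [eq_div_iff hxI, sub_mul, div_mul_cancel₀ _ hxI]
    ring
  rw [h1, map_div₀ Complex.normSq]
  congr 1
  · have hre : (Complex.exp (x * Complex.I)).re = Real.cos x := Complex.exp_ofReal_mul_I_re x
    have him : (Complex.exp (x * Complex.I)).im = Real.sin x := Complex.exp_ofReal_mul_I_im x
    rw [Complex.normSq_apply]
    simp only [Complex.sub_re, Complex.sub_im, Complex.add_re, Complex.add_im,
      Complex.one_re, Complex.one_im, Complex.mul_re, Complex.mul_im, Complex.I_re,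
      Complex.I_im, Complex.ofReal_re, Complex.ofReal_im, hre, him]
    nlinarith [Real.sin_sq_add_cos_sq x]
  · simp [Complex.normSq_mul, Complex.normSq_I, Complex.normSq_ofReal]
    ring

set_option maxHeartbeats 1600000 in
/-- the tone distance squared is equivalent, up to universal constants,
to `(|v|² + |v'|²) · min(1, T²|f-f'|²) + |v - v'|²`. -/
theorem tone_dist_sq_equiv :
    ∃ c C : ℝ, 0 < c ∧ 0 < C ∧
      ∀ (v v' : ℂ) (f f' T : ℝ), 0 < T →
        c * ((‖v‖ ^ 2 + ‖v'‖ ^ 2) * min 1 (T ^ 2 * |f - f'| ^ 2) + ‖v - v'‖ ^ 2)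
            ≤ toneDistSq v v' f f' T ∧
        toneDistSq v v' f f' T
            ≤ C * ((‖v‖ ^ 2 + ‖v'‖ ^ 2) * min 1 (T ^ 2 * |f - f'| ^ 2) + ‖v - v'‖ ^ 2) := by
  refine ⟨1/400, 13000, by norm_num, by norm_num, ?_⟩
  intro v v' f f' T hT
  have hT0 : T ≠ 0 := ne_of_gt hT
  have hDint : toneDistSq v v' f f' T
      = (1/T) * (T * (‖v‖^2 + ‖v'‖^2)
        - 2 * (v * (starRingEnd ℂ) v'
            * ∫ t in (0:ℝ)..T, Complex.exp (((2*π*(f-f')*t : ℝ)) * Complex.I)).re) := by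
    rw [toneDistSq, tone_integral]
  by_cases hff : f = f'
  · -- equal frequencies
    subst hff
    have h0 : ∀ t : ℝ, (((2*π*(f-f)*t : ℝ) : ℂ)) * Complex.I = 0 := by
      intro t; norm_num
    rw [hDint]
    simp only [h0, Complex.exp_zero]
    rw [intervalIntegral.integral_const]
    have hre : (v * (starRingEnd ℂ) v' * ((T - 0 : ℝ) • (1:ℂ))).re
        = T * (v * (starRingEnd ℂ) v').re := by
      have hsm : ((T - 0 : ℝ) • (1:ℂ)) = ((T:ℝ):ℂ) := by
        simp [Complex.real_smul]
      rw [hsm, mul_comm (v * (starRingEnd ℂ) v') (((T:ℝ)):ℂ), Complex.re_ofReal_mul]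
    rw [hre]
    have hW : ‖v - v'‖^2 = ‖v‖^2 + ‖v'‖^2 - 2*(v * (starRingEnd ℂ) v').re := by
      rw [norm_sq_eq_normSq, norm_sq_eq_normSq, norm_sq_eq_normSq, Complex.normSq_sub]
    have hsimp : (1/T) * (T * (‖v‖^2 + ‖v'‖^2) - 2 * (T * (v * (starRingEnd ℂ) v').re))
        = ‖v‖^2 + ‖v'‖^2 - 2*(v * (starRingEnd ℂ) v').re := by
      field_simp
    rw [hsimp, ← hW]
    simp only [sub_self, abs_zero]
    have h00 : min (1:ℝ) (T^2*0^2) = 0 := by norm_num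
    rw [h00]
    constructor <;> nlinarith [sq_nonneg ‖v - v'‖]
  · -- distinct frequencies
    have hδ : f - f' ≠ 0 := sub_ne_zero.mpr hff
    have hβ : 2*π*(f-f') ≠ 0 :=
      mul_ne_zero (mul_ne_zero two_ne_zero Real.pi_ne_zero) hδ
    set x : ℝ := 2*π*(f-f')*T with hxdef
    have hx : x ≠ 0 := mul_ne_zero hβ hT0
    set g : ℂ := (Complex.exp ((x:ℝ) * Complex.I) - 1)/((x:ℝ) * Complex.I) with hgdef
    have hβI : ((2*π*(f-f') : ℝ) : ℂ) * Complex.I ≠ 0 :=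
      mul_ne_zero (Complex.ofReal_ne_zero.mpr hβ) Complex.I_ne_zero
    have hxI : ((x:ℝ) : ℂ) * Complex.I ≠ 0 :=
      mul_ne_zero (Complex.ofReal_ne_zero.mpr hx) Complex.I_ne_zero
    have hIeval : (∫ t in (0:ℝ)..T, Complex.exp (((2*π*(f-f')*t : ℝ)) * Complex.I))
        = (Complex.exp ((x:ℝ) * Complex.I) - 1) / (((2*π*(f-f') : ℝ) : ℂ) * Complex.I) := by
      have hrw : ∀ t : ℝ, (((2*π*(f-f')*t : ℝ)):ℂ) * Complex.I
          = (((2*π*(f-f') : ℝ):ℂ) * Complex.I) * (t:ℂ) := by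
        intro t; push_cast; ring
      simp only [hrw]
      rw [integral_exp_mul_complex hβI]
      rw [show ((2*π*(f-f') : ℝ):ℂ) * Complex.I * (T:ℂ) = ((x:ℝ):ℂ) * Complex.I by
        push_cast [hxdef]; ring]
      norm_num
    have hTg : (Complex.exp ((x:ℝ) * Complex.I) - 1) / (((2*π*(f-f') : ℝ) : ℂ) * Complex.I)
        = (T:ℂ) * g := by
      rw [hgdef, mul_div_assoc']
      refine (div_eq_div_iff hβI hxI).mpr ?_
      rw [show (((x:ℝ)):ℂ) = ((2*π*(f-f') : ℝ) : ℂ) * (T:ℂ) by push_cast [hxdef]; ring]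
      ring
    have hD : toneDistSq v v' f f' T
        = ‖v‖^2 + ‖v'‖^2 - 2 * (v * (starRingEnd ℂ) v' * g).re := by
      rw [hDint, hIeval, hTg]
      rw [show v * (starRingEnd ℂ) v' * ((T:ℂ) * g) = (T:ℂ) * (v * (starRingEnd ℂ) v' * g) by
        ring]
      rw [Complex.re_ofReal_mul]
      field_simp
    -- real quantities
    have hG : Complex.normSq g = (2 - 2*Real.cos x)/x^2 := g_normSq hx
    have hN : Complex.normSq (1 - g) = (x^2 - 2*x*Real.sin x + 2 - 2*Real.cos x)/x^2 :=
      g_one_sub_normSq hx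
    have hx2 : (0:ℝ) < x^2 := by positivity
    have hxval : x^2 = 4*π^2*(T^2*(f-f')^2) := by rw [hxdef]; ring
    have habs : |f - f'|^2 = (f-f')^2 := sq_abs _
    have hπ3 : (3:ℝ) < π := Real.pi_gt_three
    have hπ4 : π < 3.15 := by
      have := Real.pi_lt_d2
      linarith
    have h1G : 1 - Complex.normSq g = (x^2 - 2 + 2*Real.cos x)/x^2 := by
      rw [hG]; field_simp; ring
    have hG1 : Complex.normSq g ≤ 1 := by
      rw [hG, div_le_one hx2]
      have := two_sub_cos x
      linarith
    have hNle : Complex.normSq (1 - g) ≤ 160 * (1 - Complex.normSq g) := by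
      rw [hN, h1G, ← mul_div_assoc, div_le_div_iff₀ hx2 hx2]
      nlinarith [key_R3 x, hx2]
    have hm'x : min 1 (T^2*|f-f'|^2) ≤ min 1 (x^2) := by
      apply min_le_min le_rfl
      rw [habs, hxval]
      nlinarith [mul_nonneg (by nlinarith [hπ3] : (0:ℝ) ≤ 4*π^2 - 1)
        (mul_nonneg (sq_nonneg T) (sq_nonneg (f-f')))]
    have hlow : min 1 (T^2*|f-f'|^2) ≤ 20 * (1 - Complex.normSq g) := by
      refine hm'x.trans ?_
      rw [h1G, ← mul_div_assoc, le_div_iff₀ hx2]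
      nlinarith [key_low x]
    have hm'0 : (0:ℝ) ≤ min 1 (T^2*|f-f'|^2) := le_min (by norm_num) (by positivity)
    have hup : 1 - Complex.normSq g ≤ 40 * min 1 (T^2*|f-f'|^2) := by
      rcases le_or_gt 1 (T^2*|f-f'|^2) with hc | hc
      · rw [min_eq_left hc]
        have hG0 : 0 ≤ Complex.normSq g := Complex.normSq_nonneg g
        linarith
      · rw [min_eq_right hc.le, habs]
        have hq0 : (0:ℝ) ≤ T^2*(f-f')^2 := mul_nonneg (sq_nonneg T) (sq_nonneg (f-f'))
        rcases le_or_gt (x^2) 1 with hc2 | hc2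
        · have hk := key_up_small hc2
          rw [h1G]
          have h8 : (x^2 - 2 + 2*Real.cos x)/x^2 ≤ x^2/8 := by
            rw [div_le_iff₀ hx2]
            nlinarith [hk]
          refine h8.trans ?_
          rw [hxval]
          nlinarith [mul_nonneg (by nlinarith [hπ4, hπ3] : (0:ℝ) ≤ 40 - π^2/2) hq0]
        · have hG0 : 0 ≤ Complex.normSq g := Complex.normSq_nonneg g
          have h1 : 1 - Complex.normSq g ≤ 1 := by linarith
          refine h1.trans ?_
          have hx1 : (1:ℝ) ≤ 4*π^2*(T^2*(f-f')^2) := by rw [← hxval]; exact hc2.le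
          nlinarith [mul_nonneg (by nlinarith [hπ4, hπ3] : (0:ℝ) ≤ 40 - 4*π^2) hq0, hx1]
    -- assemble
    rw [hD, norm_sq_eq_normSq, norm_sq_eq_normSq, norm_sq_eq_normSq]
    have hE1 : Complex.normSq v + Complex.normSq v' - 2*(v * (starRingEnd ℂ) v' * g).re
        = Complex.normSq v * (1 - Complex.normSq g) + Complex.normSq (v*g - v') := by
      have h := idI1 v v' g
      linarith [h]
    have hE2 : Complex.normSq v + Complex.normSq v' - 2*(v * (starRingEnd ℂ) v' * g).re
        = Complex.normSq v' * (1 - Complex.normSq g)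
          + Complex.normSq (v' * (starRingEnd ℂ) g - v) := by
      have h := idI2 v v' g
      linarith [h]
    have htri1 := tri1 v v' g
    have htri2 := tri2 v v' g
    have hA0 := Complex.normSq_nonneg v
    have hB0 := Complex.normSq_nonneg v'
    have hP10 := Complex.normSq_nonneg (v*g - v')
    have hP20 := Complex.normSq_nonneg (v' * (starRingEnd ℂ) g - v)
    have hW0 := Complex.normSq_nonneg (v - v')
    have hN0 := Complex.normSq_nonneg (1 - g)
    have h1Gnn : (0:ℝ) ≤ 1 - Complex.normSq g := by linarith
    have hq1 : min 1 (T^2*|f-f'|^2) * Complex.normSq v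
        ≤ (20*(1 - Complex.normSq g)) * Complex.normSq v :=
      mul_le_mul_of_nonneg_right hlow hA0
    have hq2 : min 1 (T^2*|f-f'|^2) * Complex.normSq v'
        ≤ (20*(1 - Complex.normSq g)) * Complex.normSq v' :=
      mul_le_mul_of_nonneg_right hlow hB0
    have hq3 : Complex.normSq v * Complex.normSq (1-g)
        ≤ Complex.normSq v * (160*(1 - Complex.normSq g)) :=
      mul_le_mul_of_nonneg_left hNle hA0
    have hq4 : Complex.normSq v * (1 - Complex.normSq g)
        ≤ Complex.normSq v * (40 * min 1 (T^2*|f-f'|^2)) :=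
      mul_le_mul_of_nonneg_left hup hA0
    have hag : (0:ℝ) ≤ Complex.normSq v * (1 - Complex.normSq g) := mul_nonneg hA0 h1Gnn
    have hbg : (0:ℝ) ≤ Complex.normSq v' * (1 - Complex.normSq g) := mul_nonneg hB0 h1Gnn
    have hmb : (0:ℝ) ≤ min 1 (T^2*|f-f'|^2) * Complex.normSq v' := mul_nonneg hm'0 hB0
    constructor
    · linarith [hq1, hq2, htri1, hE1, hE2, hq3, hag, hbg, hP10, hP20, hW0]
    · linarith [hE1, htri2, hq3, hq4, hmb, hW0, hag, hP10]
end

section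
/- Upper bound half of the tone distance lemma: for v,v' ∈ ℂ, f,f' ∈ ℝ, T>0, (1/T)∫_0^T |v e^{2πift} - v' e^{2πif't}|^2 dt ≤ 2|v|^2·min(4, (4π²/3)T²(f-f')²) + 2|v-v'|². -/
open MeasureTheory Real

lemma norm_exp_mul_I_sub_one_sq (θ : ℝ) :
    ‖Complex.exp (θ * Complex.I) - 1‖ ^ 2 = 2 - 2 * Real.cos θ := by
  rw [Complex.exp_mul_I]
  have h1 : Complex.cos θ + Complex.sin θ * Complex.I - 1
      = Complex.ofReal (Real.cos θ - 1) + Complex.ofReal (Real.sin θ) * Complex.I := by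
    push_cast [Complex.ofReal_cos, Complex.ofReal_sin]
    ring
  rw [h1, Complex.sq_norm, Complex.normSq_add_mul_I]
  nlinarith [Real.sin_sq_add_cos_sq θ]

lemma norm_exp_sub_exp_sq_le (a b : ℝ) :
    ‖Complex.exp (a * Complex.I) - Complex.exp (b * Complex.I)‖ ^ 2 ≤ min 4 ((a - b) ^ 2) := by
  have hfac : Complex.exp (a * Complex.I) - Complex.exp (b * Complex.I)
      = Complex.exp (b * Complex.I) * (Complex.exp ((a - b : ℝ) * Complex.I) - 1) := by
    rw [mul_sub, ← Complex.exp_add, mul_one]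
    push_cast; ring_nf
  rw [hfac, norm_mul, Complex.norm_exp_ofReal_mul_I, one_mul,
    norm_exp_mul_I_sub_one_sq]
  refine le_min ?_ ?_
  · nlinarith [Real.neg_one_le_cos (a - b)]
  · nlinarith [Real.one_sub_sq_div_two_le_cos (x := a - b)]

lemma sq_norm_add_le (x y : ℂ) : ‖x + y‖ ^ 2 ≤ 2 * ‖x‖ ^ 2 + 2 * ‖y‖ ^ 2 := by
  nlinarith [norm_add_le x y, norm_nonneg (x + y), norm_nonneg x, norm_nonneg y, sq_nonneg (‖x‖ - ‖y‖)]

/-- upper bound half of the tone distance lemma. -/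
theorem tone_dist_sq_upper (v v' : ℂ) (f f' T : ℝ) (hT : 0 < T) :
    (1 / T) * ∫ t in (0:ℝ)..T,
        ‖v * Complex.exp (2 * π * f * t * Complex.I)
          - v' * Complex.exp (2 * π * f' * t * Complex.I)‖ ^ 2
      ≤ 2 * ‖v‖ ^ 2 * min 4 ((4 * π ^ 2 / 3) * T ^ 2 * (f - f') ^ 2)
          + 2 * ‖v - v'‖ ^ 2 := by
  set g : ℝ → ℝ := fun t =>
    ‖v * Complex.exp (2 * π * f * t * Complex.I)
      - v' * Complex.exp (2 * π * f' * t * Complex.I)‖ ^ 2 with hg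
  have hg_cont : Continuous g := by
    apply Continuous.pow
    apply Continuous.norm
    fun_prop
  have hg_int : IntervalIntegrable g volume 0 T := hg_cont.intervalIntegrable _ _
  -- pointwise bound
  have hpt : ∀ t : ℝ, g t ≤ 2 * ‖v‖ ^ 2 *
      min 4 ((2 * π * (f - f') * t) ^ 2) + 2 * ‖v - v'‖ ^ 2 := by
    intro t
    have hsplit : v * Complex.exp (2 * π * f * t * Complex.I)
        - v' * Complex.exp (2 * π * f' * t * Complex.I)
        = v * (Complex.exp (2 * π * f * t * Complex.I)
            - Complex.exp (2 * π * f' * t * Complex.I))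
          + (v - v') * Complex.exp (2 * π * f' * t * Complex.I) := by ring
    have h1 := sq_norm_add_le (v * (Complex.exp (2 * π * f * t * Complex.I)
            - Complex.exp (2 * π * f' * t * Complex.I)))
          ((v - v') * Complex.exp (2 * π * f' * t * Complex.I))
    have hE : ‖Complex.exp (2 * π * f * t * Complex.I)
        - Complex.exp (2 * π * f' * t * Complex.I)‖ ^ 2
        ≤ min 4 ((2 * π * (f - f') * t) ^ 2) := by
      have := norm_exp_sub_exp_sq_le (2 * π * f * t) (2 * π * f' * t)
      have hc1 : ((2 * π * f * t : ℝ) : ℂ) * Complex.I = 2 * π * f * t * Complex.I := by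
        push_cast; ring
      have hc2 : ((2 * π * f' * t : ℝ) : ℂ) * Complex.I = 2 * π * f' * t * Complex.I := by
        push_cast; ring
      rw [hc1, hc2] at this
      have harg : (2 * π * f * t - 2 * π * f' * t) ^ 2 = (2 * π * (f - f') * t) ^ 2 := by ring
      rwa [harg] at this
    have hnorm2 : ‖Complex.exp (2 * π * f' * t * Complex.I)‖ = 1 := by
      have hc2 : ((2 * π * f' * t : ℝ) : ℂ) * Complex.I = 2 * π * f' * t * Complex.I := by
        push_cast; ring
      rw [← hc2, Complex.norm_exp_ofReal_mul_I]
    simp only [hg, hsplit]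
    calc ‖_ + _‖ ^ 2 ≤ _ := h1
    _ ≤ 2 * ‖v‖ ^ 2 * min 4 ((2 * π * (f - f') * t) ^ 2) + 2 * ‖v - v'‖ ^ 2 := by
        rw [norm_mul, norm_mul, hnorm2, mul_one]
        have h2 : ‖v‖ ^ 2 * ‖Complex.exp (2 * π * f * t * Complex.I)
            - Complex.exp (2 * π * f' * t * Complex.I)‖ ^ 2
            ≤ ‖v‖ ^ 2 * min 4 ((2 * π * (f - f') * t) ^ 2) :=
          mul_le_mul_of_nonneg_left hE (sq_nonneg _)
        nlinarith [h2]
  -- two integral bounds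
  set C := 2 * ‖v - v'‖ ^ 2 with hC
  set A := 2 * ‖v‖ ^ 2 with hA
  have hA0 : 0 ≤ A := by positivity
  have hI1 : (∫ t in (0:ℝ)..T, g t) ≤ T * (A * 4 + C) := by
    have h := intervalIntegral.integral_mono_on hT.le hg_int
      (intervalIntegrable_const (c := A * 4 + C))
      (fun t _ => (hpt t).trans (by
        have : min 4 ((2 * π * (f - f') * t) ^ 2) ≤ 4 := min_le_left _ _
        nlinarith))
    rw [intervalIntegral.integral_const, sub_zero, smul_eq_mul] at h
    exact h
  have hI2 : (∫ t in (0:ℝ)..T, g t) ≤ A * ((2 * π * (f - f')) ^ 2 * (T ^ 3 / 3)) + C * T := by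
    have hbint : IntervalIntegrable (fun t => A * ((2 * π * (f - f')) ^ 2 * t ^ 2) + C) volume 0 T := by
      apply IntervalIntegrable.add _ (intervalIntegrable_const)
      apply Continuous.intervalIntegrable; fun_prop
    have hmono := intervalIntegral.integral_mono_on hT.le hg_int hbint
      (fun t _ => (hpt t).trans (by
        have : min 4 ((2 * π * (f - f') * t) ^ 2) ≤ (2 * π * (f - f') * t) ^ 2 := min_le_right _ _
        nlinarith))
    have hcalc : (∫ t in (0:ℝ)..T, A * ((2 * π * (f - f')) ^ 2 * t ^ 2) + C)
        = A * ((2 * π * (f - f')) ^ 2 * (T ^ 3 / 3)) + C * T := by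
      rw [intervalIntegral.integral_add, intervalIntegral.integral_const,
        intervalIntegral.integral_const_mul, intervalIntegral.integral_const_mul,
        integral_pow]
      · simp only [smul_eq_mul, sub_zero]; ring
      · apply Continuous.intervalIntegrable; fun_prop
      · exact intervalIntegrable_const
    rw [hcalc] at hmono
    exact hmono
  -- conclude
  rcases min_cases 4 ((4 * π ^ 2 / 3) * T ^ 2 * (f - f') ^ 2) with ⟨hmin, _⟩ | ⟨hmin, _⟩
  · rw [hmin]
    rw [div_mul_eq_mul_div, div_le_iff₀ hT]
    calc (1 : ℝ) * ∫ t in (0:ℝ)..T, g t ≤ T * (A * 4 + C) := by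
          rw [one_mul]; exact hI1
    _ = (A * 4 + C) * T := by ring
  · rw [hmin]
    rw [div_mul_eq_mul_div, div_le_iff₀ hT]
    calc (1 : ℝ) * ∫ t in (0:ℝ)..T, g t
        ≤ A * ((2 * π * (f - f')) ^ 2 * (T ^ 3 / 3)) + C * T := by rw [one_mul]; exact hI2
    _ = (A * ((4 * π ^ 2 / 3) * T ^ 2 * (f - f') ^ 2) + C) * T := by ring
end

section
/- Obtuse-angle inequality for scaled complex numbers: let v, v' ∈ ℂ with |v'| ≥ |v| > 0 and set v* = (|v|/|v'|)·v'. Then for all real angles θ, θ': |v e^{iθ} - v' e^{iθ'}|² ≥ |v e^{iθ} - v* e^{iθ'}|² + |v* - v'|². -/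
open Real

/-- obtuse-angle inequality. For `|v'| ≥ |v| > 0` and
`v* = (|v|/|v'|)·v'`, for all real `θ, θ'`:
`|v e^{iθ} - v' e^{iθ'}|² ≥ |v e^{iθ} - v* e^{iθ'}|² + |v* - v'|²`. -/
theorem obtuse_angle_ineq (v v' : ℂ) (hv : 0 < ‖v‖) (hvv' : ‖v‖ ≤ ‖v'‖)
    (θ θ' : ℝ) :
    ‖v * Complex.exp (θ * Complex.I) - ((‖v‖ / ‖v'‖ : ℝ) : ℂ) * v' * Complex.exp (θ' * Complex.I)‖ ^ 2
        + ‖((‖v‖ / ‖v'‖ : ℝ) : ℂ) * v' - v'‖ ^ 2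
      ≤ ‖v * Complex.exp (θ * Complex.I) - v' * Complex.exp (θ' * Complex.I)‖ ^ 2 := by
  have hv' : 0 < ‖v'‖ := lt_of_lt_of_le hv hvv'
  set r : ℝ := ‖v‖ / ‖v'‖ with hrdef
  have hr0 : 0 ≤ r := div_nonneg hv.le hv'.le
  have hr1 : r ≤ 1 := div_le_one_of_le₀ hvv' hv'.le
  have hrN : r * ‖v'‖ = ‖v‖ := div_mul_cancel₀ _ hv'.ne'
  set a := v * Complex.exp (θ * Complex.I) with ha
  set b := v' * Complex.exp (θ' * Complex.I) with hb
  have key : ∀ z w : ℂ, ‖z - w‖ ^ 2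
      = ‖z‖ ^ 2 + ‖w‖ ^ 2 - 2 * (z * (starRingEnd ℂ) w).re := by
    intro z w
    rw [Complex.sq_norm, Complex.sq_norm, Complex.sq_norm, Complex.normSq_sub]
  have hna : ‖a‖ = ‖v‖ := by
    rw [ha, norm_mul,
      Complex.norm_exp_ofReal_mul_I, mul_one]
  have hnb : ‖b‖ = ‖v'‖ := by
    rw [hb, norm_mul,
      Complex.norm_exp_ofReal_mul_I, mul_one]
  have hrb : ((r : ℂ)) * v' * Complex.exp (θ' * Complex.I) = (r : ℂ) * b := by
    rw [hb]; ring
  have hRle : (a * (starRingEnd ℂ) b).re ≤ ‖v‖ * ‖v'‖ := by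
    calc (a * (starRingEnd ℂ) b).re ≤ ‖a * (starRingEnd ℂ) b‖ :=
        Complex.re_le_norm _
      _ = ‖v‖ * ‖v'‖ := by
        rw [norm_mul, Complex.norm_conj,
          hna, hnb]
  have e1 : ‖a - (r : ℂ) * b‖ ^ 2
      = ‖v‖ ^ 2 + r ^ 2 * ‖v'‖ ^ 2 - 2 * (r * (a * (starRingEnd ℂ) b).re) := by
    rw [key, hna, norm_mul, Complex.norm_real, Real.norm_of_nonneg hr0, hnb,
      map_mul, Complex.conj_ofReal]
    have : (a * ((r : ℂ) * (starRingEnd ℂ) b)) = (r : ℂ) * (a * (starRingEnd ℂ) b) := by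
      ring
    rw [this, Complex.re_ofReal_mul]
    ring
  have e2 : ‖(r : ℂ) * v' - v'‖ ^ 2 = r ^ 2 * ‖v'‖ ^ 2 + ‖v'‖ ^ 2 - 2 * (r * ‖v'‖ ^ 2) := by
    rw [key, norm_mul, Complex.norm_real, Real.norm_of_nonneg hr0]
    have : ((r : ℂ) * v' * (starRingEnd ℂ) v').re = r * ‖v'‖ ^ 2 := by
      rw [mul_assoc, Complex.mul_conj, ← Complex.ofReal_mul, Complex.ofReal_re,
        Complex.normSq_eq_norm_sq]
    rw [this]
    ring
  have e3 : ‖a - b‖ ^ 2 = ‖v‖ ^ 2 + ‖v'‖ ^ 2 - 2 * (a * (starRingEnd ℂ) b).re := by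
    rw [key, hna, hnb]
  rw [hrb, e1, e2, e3]
  have hR2 : (a * (starRingEnd ℂ) b).re ≤ r * ‖v'‖ ^ 2 := by
    rw [pow_two, ← mul_assoc, hrN]; exact hRle
  nlinarith [mul_nonneg (sub_nonneg.2 hr1) (sub_nonneg.2 hR2)]
end

section
/- Full integral bound: for real frequencies f_i ≠ f_j with |f_i − f_j| ≥ 2/T and T > 0, ∫_{−∞}^{∞} min(T, 1/|f_i − θ|) · min(T, 1/|f_j − θ|) dθ ≤ C · log(T|f_i − f_j|)/|f_i − f_j| for some universal constant C. -/
open MeasureTheory Real Set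

/-- full integral bound.  For `|f_i - f_j| ≥ 2/T`,
`∫_ℝ min(T, 1/|f_i - θ|) · min(T, 1/|f_j - θ|) dθ ≤ C·log(T|f_i - f_j|)/|f_i - f_j|`. -/
theorem integral_bound_full :
    ∃ C : ℝ, 0 < C ∧
      ∀ (T fi fj : ℝ), 0 < T → fi ≠ fj → 2 / T ≤ |fi - fj| →
        (∫ θ : ℝ, min T (1 / |fi - θ|) * min T (1 / |fj - θ|))
          ≤ C * Real.log (T * |fi - fj|) / |fi - fj| := by
  refine ⟨32, by norm_num, ?_⟩
  intro T fi fj hT hne hgap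
  set Δ := |fi - fj| with hΔdef
  have hΔ : 0 < Δ := abs_pos.2 (sub_ne_zero.2 hne)
  have hTΔ : 2 ≤ T * Δ := by
    rw [div_le_iff₀ hT] at hgap; linarith
  set a := 1 / T with ha_def
  set b := Δ / 2 with hb_def
  have ha : 0 < a := by positivity
  have hb : 0 < b := by positivity
  have hab : a ≤ b := by
    rw [ha_def, hb_def, div_le_div_iff₀ hT two_pos]; linarith
  set φ : ℝ → ℝ := fun x => min T (1 / |x|) with hφ_def
  set F : ℝ → ℝ := fun x => φ x * min (2 / Δ) (1 / |x|) with hF_def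
  have hφ0 : ∀ x, 0 ≤ φ x := fun x => le_min hT.le (by positivity)
  have hF0 : ∀ x, 0 ≤ F x := fun x =>
    mul_nonneg (hφ0 x) (le_min (by positivity) (by positivity))
  have hFle : ∀ x, F x ≤ T * (2 / Δ) := fun x =>
    mul_le_mul (min_le_left _ _) (min_le_left _ _)
      (le_min (by positivity) (by positivity)) hT.le
  have hFnorm : ∀ x, ‖F x‖ ≤ T * (2 / Δ) := fun x => by
    rw [Real.norm_eq_abs, abs_of_nonneg (hF0 x)]; exact hFle x
  have hφm : Measurable φ := measurable_const.min (measurable_const.div measurable_abs)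
  have hFm : Measurable F :=
    hφm.mul (measurable_const.min (measurable_const.div measurable_abs))
  -- key pointwise bound
  have helper : ∀ x y : ℝ, Δ ≤ |x| + |y| → |x| ≤ |y| → φ x * φ y ≤ F x := by
    intro x y hxy hle
    have hy : b ≤ |y| := by rw [hb_def]; linarith
    have hy0 : (0 : ℝ) < |y| := lt_of_lt_of_le hb hy
    have h1 : φ y ≤ 1 / |y| := min_le_right _ _
    have h2 : (1 : ℝ) / |y| ≤ 2 / Δ := by
      rw [div_le_div_iff₀ hy0 hΔ]; linarith
    rcases eq_or_lt_of_le (abs_nonneg x) with hx0 | hx0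
    · have hx : |x| = 0 := hx0.symm
      have : φ x = 0 := by simp [hφ_def, hx, min_eq_right hT.le]
      rw [this, zero_mul]; exact hF0 x
    · have h3 : (1 : ℝ) / |y| ≤ 1 / |x| := one_div_le_one_div_of_le hx0 hle
      calc φ x * φ y ≤ φ x * min (2 / Δ) (1 / |x|) :=
            mul_le_mul_of_nonneg_left (le_min (h1.trans h2) (h1.trans h3)) (hφ0 x)
        _ = F x := rfl
  have key : ∀ θ : ℝ,
      min T (1 / |fi - θ|) * min T (1 / |fj - θ|) ≤ F (θ - fi) + F (θ - fj) := by
    intro θ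
    have hsum : Δ ≤ |θ - fi| + |θ - fj| := by
      calc Δ = |fi - fj| := rfl
        _ ≤ |fi - θ| + |θ - fj| := abs_sub_le fi θ fj
        _ = |θ - fi| + |θ - fj| := by rw [abs_sub_comm fi θ]
    rw [abs_sub_comm fi θ, abs_sub_comm fj θ]
    rcases le_total |θ - fi| |θ - fj| with h | h
    · exact (helper (θ - fi) (θ - fj) hsum h).trans (le_add_of_nonneg_right (hF0 _))
    · have := helper (θ - fj) (θ - fi) (by linarith) h
      rw [mul_comm]
      exact this.trans (le_add_of_nonneg_left (hF0 _))
  -- integrability pieces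
  have hi1 : IntegrableOn F (Ioc 0 a) :=
    Measure.integrableOn_of_bounded measure_Ioc_lt_top.ne hFm.aestronglyMeasurable
      (ae_of_all _ hFnorm)
  have hi2 : IntegrableOn F (Ioc a b) :=
    Measure.integrableOn_of_bounded measure_Ioc_lt_top.ne hFm.aestronglyMeasurable
      (ae_of_all _ hFnorm)
  have hrint : IntegrableOn (fun x : ℝ => x ^ (-2 : ℝ)) (Ioi b) :=
    integrableOn_Ioi_rpow_of_lt (by norm_num) hb
  have hFtail : ∀ x : ℝ, x ∈ Ioi b → F x ≤ x ^ (-2 : ℝ) := by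
    intro x hx
    have hx0 : (0 : ℝ) < x := lt_trans hb hx
    have hxx : |x| = x := abs_of_pos hx0
    have h1 : F x ≤ 1 / x * (1 / x) := by
      rw [hF_def, hφ_def]
      simp only [hxx]
      exact mul_le_mul (min_le_right _ _) (min_le_right _ _)
        (le_min (by positivity) (by positivity)) (by positivity)
    have h2 : x ^ (-2 : ℝ) = 1 / x * (1 / x) := by
      rw [Real.rpow_neg hx0.le, show (2 : ℝ) = ((2 : ℕ) : ℝ) by norm_num,
        Real.rpow_natCast]
      field_simp
    rw [h2]; exact h1
  have hi3 : IntegrableOn F (Ioi b) := by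
    refine Integrable.mono' hrint hFm.aestronglyMeasurable ?_
    filter_upwards [ae_restrict_mem measurableSet_Ioi] with x hx
    rw [Real.norm_eq_abs, abs_of_nonneg (hF0 x)]
    exact hFtail x hx
  have hu1 : IntegrableOn F (Ioi a) := by
    rw [← Ioc_union_Ioi_eq_Ioi hab]; exact hi2.union hi3
  have hIoi : IntegrableOn F (Ioi 0) := by
    rw [← Ioc_union_Ioi_eq_Ioi ha.le]; exact hi1.union hu1
  have hFeven : (F ∘ Neg.neg) = F := funext fun x => by
    simp [hF_def, hφ_def, abs_neg]
  have hmap : (volume.restrict (Ioi (0 : ℝ))).map Neg.neg = volume.restrict (Iio 0) := by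
    conv_rhs => rw [← Measure.map_neg_eq_self (volume : Measure ℝ),
      measurableEmbedding_neg.restrict_map]
    simp
  have hIio : IntegrableOn F (Iio 0) := by
    rw [IntegrableOn, ← hmap, measurableEmbedding_neg.integrable_map_iff]
    show Integrable (F ∘ Neg.neg) _
    rw [hFeven]; exact hIoi
  have hIic : IntegrableOn F (Iic 0) := (integrableOn_Iic_iff_integrableOn_Iio (by exact enorm_ne_top)).2 hIio
  have hFint : Integrable F := by
    rw [← integrableOn_univ, ← Set.Iic_union_Ioi (a := (0 : ℝ))]
    exact hIic.union hIoi
  -- integral over Iic 0 equals integral over Ioi 0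
  have hIicEq : ∫ x in Iic (0 : ℝ), F x = ∫ x in Ioi (0 : ℝ), F x := by
    have hFeven' : ∀ x : ℝ, F (-x) = F x := fun x => by simp [hF_def, hφ_def, abs_neg]
    have h := integral_comp_neg_Ioi (0 : ℝ) F
    simp only [hFeven', neg_zero] at h
    exact h.symm
  -- bounds on the three pieces
  have J1 : ∫ x in Ioc (0 : ℝ) a, F x ≤ 2 / Δ := by
    calc ∫ x in Ioc (0 : ℝ) a, F x ≤ ∫ _x in Ioc (0 : ℝ) a, T * (2 / Δ) :=
          setIntegral_mono_on hi1 (integrableOn_const measure_Ioc_lt_top.ne enorm_ne_top)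
            measurableSet_Ioc (fun x _ => hFle x)
      _ = a * (T * (2 / Δ)) := by
          rw [setIntegral_const, measureReal_def, Real.volume_Ioc, smul_eq_mul, sub_zero,
            ENNReal.toReal_ofReal ha.le]
      _ = 2 / Δ := by rw [ha_def]; field_simp
  have J2 : ∫ x in Ioc a b, F x ≤ 2 / Δ * Real.log (T * Δ / 2) := by
    have hptwise : ∀ x ∈ Ioc a b, F x ≤ 2 / Δ * x⁻¹ := by
      intro x hx
      have hx0 : (0 : ℝ) < x := lt_trans ha hx.1
      have hxx : |x| = x := abs_of_pos hx0
      calc F x ≤ 1 / |x| * (2 / Δ) := by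
            rw [hF_def, hφ_def]
            exact mul_le_mul (min_le_right _ _) (min_le_left _ _)
              (le_min (by positivity) (by positivity)) (by positivity)
        _ = 2 / Δ * x⁻¹ := by rw [hxx]; field_simp
    have hgint : IntegrableOn (fun x : ℝ => 2 / Δ * x⁻¹) (Ioc a b) := by
      refine (ContinuousOn.integrableOn_Icc ?_).mono_set Ioc_subset_Icc_self
      exact continuousOn_const.mul (continuousOn_inv₀.mono
        (fun x hx => ne_of_gt (lt_of_lt_of_le ha hx.1)))
    calc ∫ x in Ioc a b, F x ≤ ∫ x in Ioc a b, 2 / Δ * x⁻¹ :=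
          setIntegral_mono_on hi2 hgint measurableSet_Ioc hptwise
      _ = 2 / Δ * ∫ x in Ioc a b, x⁻¹ := by rw [integral_const_mul]
      _ = 2 / Δ * Real.log (b / a) := by
          rw [← intervalIntegral.integral_of_le hab, integral_inv]
          rw [Set.uIcc_of_le hab]
          intro hmem
          exact absurd hmem.1 (not_le.2 ha)
      _ = 2 / Δ * Real.log (T * Δ / 2) := by
          congr 1
          rw [ha_def, hb_def]
          field_simp
  have J3 : ∫ x in Ioi b, F x ≤ 2 / Δ := by
    calc ∫ x in Ioi b, F x ≤ ∫ x in Ioi b, x ^ (-2 : ℝ) :=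
          setIntegral_mono_on hi3 hrint measurableSet_Ioi hFtail
      _ = -b ^ (-2 + 1 : ℝ) / (-2 + 1) := integral_Ioi_rpow_of_lt (by norm_num) hb
      _ = b⁻¹ := by norm_num [Real.rpow_neg_one]
      _ = 2 / Δ := by rw [hb_def]; field_simp
  -- combine
  have e2 : ∫ x in Ioi a, F x = (∫ x in Ioc a b, F x) + ∫ x in Ioi b, F x := by
    rw [← setIntegral_union Ioc_disjoint_Ioi_same measurableSet_Ioi hi2 hi3,
      Ioc_union_Ioi_eq_Ioi hab]
  have e1 : ∫ x in Ioi (0 : ℝ), F x = (∫ x in Ioc (0 : ℝ) a, F x) + ∫ x in Ioi a, F x := by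
    rw [← setIntegral_union Ioc_disjoint_Ioi_same measurableSet_Ioi hi1 hu1,
      Ioc_union_Ioi_eq_Ioi ha.le]
  have hIoiBound : ∫ x in Ioi (0 : ℝ), F x ≤ 4 / Δ + 2 / Δ * Real.log (T * Δ / 2) := by
    rw [e1, e2]
    have h4 : (4:ℝ) / Δ = 2 / Δ + 2 / Δ := by ring
    linarith
  have hTotal : ∫ x : ℝ, F x ≤ 8 / Δ + 4 / Δ * Real.log (T * Δ / 2) := by
    rw [← intervalIntegral.integral_Iic_add_Ioi hIic hIoi, hIicEq]
    have h8 : (8:ℝ) / Δ = 4 / Δ + 4 / Δ := by ring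
    have h44 : (4:ℝ) / Δ * Real.log (T * Δ / 2) = 2 / Δ * Real.log (T * Δ / 2) + 2 / Δ * Real.log (T * Δ / 2) := by ring
    linarith
  -- main comparison
  have hG : Integrable (fun θ : ℝ => F (θ - fi) + F (θ - fj)) :=
    (hFint.comp_sub_right fi).add (hFint.comp_sub_right fj)
  have hLHSm : Measurable (fun θ : ℝ => min T (1 / |fi - θ|) * min T (1 / |fj - θ|)) := by
    apply Measurable.mul <;>
      exact measurable_const.min
        (measurable_const.div ((measurable_const.sub measurable_id).abs))
  have hLHSint : Integrable (fun θ : ℝ => min T (1 / |fi - θ|) * min T (1 / |fj - θ|)) := by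
    refine hG.mono' hLHSm.aestronglyMeasurable (ae_of_all _ fun θ => ?_)
    rw [Real.norm_eq_abs, abs_of_nonneg (mul_nonneg (le_min hT.le (by positivity))
      (le_min hT.le (by positivity)))]
    exact key θ
  have hlog2 : Real.log 2 ≤ Real.log (T * Δ) :=
    Real.log_le_log (by norm_num) hTΔ
  have hlogmono : Real.log (T * Δ / 2) ≤ Real.log (T * Δ) :=
    Real.log_le_log (by linarith) (by linarith)
  have hlog2pos : (0.6931471803 : ℝ) < Real.log 2 := Real.log_two_gt_d9
  calc (∫ θ : ℝ, min T (1 / |fi - θ|) * min T (1 / |fj - θ|))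
      ≤ ∫ θ : ℝ, (F (θ - fi) + F (θ - fj)) := integral_mono hLHSint hG key
    _ = (∫ θ : ℝ, F (θ - fi)) + ∫ θ : ℝ, F (θ - fj) :=
        integral_add (hFint.comp_sub_right fi) (hFint.comp_sub_right fj)
    _ = 2 * ∫ x : ℝ, F x := by
        rw [integral_sub_right_eq_self F fi, integral_sub_right_eq_self F fj]; ring
    _ ≤ 2 * (8 / Δ + 4 / Δ * Real.log (T * Δ / 2)) := by linarith
    _ = (16 + 8 * Real.log (T * Δ / 2)) / Δ := by field_simp; ring
    _ ≤ 32 * Real.log (T * Δ) / Δ := by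
        gcongr (?_) / Δ
        linarith
end

section
/- Coordinate-wise median bound: if x^{(1)}, …, x^{(n)} ∈ ℝ^3 and x' ∈ ℝ^3 is the coordinate-wise median, then ‖x'‖₂² ≤ 3 · median_i ‖x^{(i)}‖₂². -/
open Finset

/-- The (upper) median of `n+1` reals: the `(⌊(n+1)/2⌋+1)`-th smallest element,
obtained by sorting the tuple. -/
noncomputable def realMedian {n : ℕ} (a : Fin (n + 1) → ℝ) : ℝ :=
  (a ∘ Tuple.sort a) ⟨(n + 1) / 2, by omega⟩

lemma card_le_median {n : ℕ} (a : Fin (n + 1) → ℝ) :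
    (n + 1) / 2 + 1 ≤ #(univ.filter (fun i => a i ≤ realMedian a)) := by
  classical
  set k : Fin (n + 1) := ⟨(n + 1) / 2, by omega⟩
  have hmono := Tuple.monotone_sort a
  have hsub : (Finset.Iic k).image (Tuple.sort a) ⊆
      univ.filter (fun i => a i ≤ realMedian a) := by
    intro i hi
    simp only [Finset.mem_image, Finset.mem_Iic] at hi
    obtain ⟨p, hp, rfl⟩ := hi
    simp only [Finset.mem_filter, Finset.mem_univ, true_and]
    exact hmono hp
  calc (n + 1) / 2 + 1 = #(Finset.Iic k) := by rw [Fin.card_Iic]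
    _ = #((Finset.Iic k).image (Tuple.sort a)) :=
        (Finset.card_image_of_injective _ (Tuple.sort a).injective).symm
    _ ≤ _ := Finset.card_le_card hsub

lemma card_median_le {n : ℕ} (a : Fin (n + 1) → ℝ) :
    n + 1 - (n + 1) / 2 ≤ #(univ.filter (fun i => realMedian a ≤ a i)) := by
  classical
  set k : Fin (n + 1) := ⟨(n + 1) / 2, by omega⟩
  have hmono := Tuple.monotone_sort a
  have hsub : (Finset.Ici k).image (Tuple.sort a) ⊆
      univ.filter (fun i => realMedian a ≤ a i) := by
    intro i hi
    simp only [Finset.mem_image, Finset.mem_Ici] at hi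
    obtain ⟨p, hp, rfl⟩ := hi
    simp only [Finset.mem_filter, Finset.mem_univ, true_and]
    exact hmono hp
  calc n + 1 - (n + 1) / 2 = #(Finset.Ici k) := by rw [Fin.card_Ici]
    _ = #((Finset.Ici k).image (Tuple.sort a)) :=
        (Finset.card_image_of_injective _ (Tuple.sort a).injective).symm
    _ ≤ _ := Finset.card_le_card hsub

/-- Pigeonhole: two "disjoint" predicates on `Fin (n+1)` can't have filters
with total cardinality exceeding `n+1`. -/
lemma pigeon {n : ℕ} {p q : Fin (n + 1) → Prop} [DecidablePred p] [DecidablePred q]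
    (hd : ∀ i, ¬ (p i ∧ q i))
    (h : n + 1 < #(univ.filter p) + #(univ.filter q)) : False := by
  classical
  have hdisj : Disjoint (univ.filter p) (univ.filter q) := by
    rw [Finset.disjoint_left]
    intro i hi hi'
    simp only [Finset.mem_filter] at hi hi'
    exact hd i ⟨hi.2, hi'.2⟩
  have := Finset.card_union_of_disjoint hdisj ▸
    Finset.card_le_card (Finset.subset_univ ((univ.filter p) ∪ (univ.filter q)))
  simp only [Finset.card_univ, Fintype.card_fin] at this
  omega

lemma realMedian_mono {n : ℕ} {a b : Fin (n + 1) → ℝ} (hab : ∀ i, a i ≤ b i) :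
    realMedian a ≤ realMedian b := by
  classical
  by_contra h
  push_neg at h
  refine pigeon (p := fun i => b i ≤ realMedian b) (q := fun i => realMedian a ≤ a i)
    (fun i hi => ?_) ?_
  · exact absurd (lt_of_le_of_lt ((hab i).trans hi.1) h) (not_lt.2 hi.2)
  · have h1 := card_le_median b
    have h2 := card_median_le a
    omega

lemma sq_realMedian_le {n : ℕ} (a : Fin (n + 1) → ℝ) :
    (realMedian a) ^ 2 ≤ realMedian (fun i => (a i) ^ 2) := by
  classical
  by_contra h
  push_neg at h
  have hM := card_le_median (fun i => (a i) ^ 2)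
  rcases le_or_gt 0 (realMedian a) with hm | hm
  · refine pigeon (p := fun i => (a i) ^ 2 ≤ realMedian (fun i => (a i) ^ 2))
      (q := fun i => realMedian a ≤ a i) (fun i hi => ?_) ?_
    · have : (realMedian a) ^ 2 ≤ (a i) ^ 2 := by nlinarith [hi.2]
      exact absurd (lt_of_le_of_lt (this.trans hi.1) h) (lt_irrefl _)
    · have h2 := card_median_le a
      omega
  · refine pigeon (p := fun i => (a i) ^ 2 ≤ realMedian (fun i => (a i) ^ 2))
      (q := fun i => a i ≤ realMedian a) (fun i hi => ?_) ?_
    · have : (realMedian a) ^ 2 ≤ (a i) ^ 2 := by nlinarith [hi.2]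
      exact absurd (lt_of_le_of_lt (this.trans hi.1) h) (lt_irrefl _)
    · have h2 := card_le_median a
      omega

/-- if `x' ∈ ℝ³` is the coordinate-wise median of
`x⁽¹⁾, …, x⁽ⁿ⁺¹⁾ ∈ ℝ³`, then `‖x'‖₂² ≤ 3 · median_i ‖x⁽ⁱ⁾‖₂²`. -/
theorem median_norm_sq_le {n : ℕ} (x : Fin (n + 1) → Fin 3 → ℝ) :
    ∑ j : Fin 3, (realMedian (fun i => x i j)) ^ 2
      ≤ 3 * realMedian (fun i => ∑ j : Fin 3, (x i j) ^ 2) := by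
  have key : ∀ j : Fin 3, (realMedian (fun i => x i j)) ^ 2
      ≤ realMedian (fun i => ∑ j : Fin 3, (x i j) ^ 2) := by
    intro j
    refine (sq_realMedian_le (fun i => x i j)).trans (realMedian_mono fun i => ?_)
    exact Finset.single_le_sum (f := fun j => (x i j) ^ 2) (fun j _ => sq_nonneg _)
      (Finset.mem_univ j)
  calc ∑ j : Fin 3, (realMedian (fun i => x i j)) ^ 2
      ≤ ∑ _j : Fin 3, realMedian (fun i => ∑ j : Fin 3, (x i j) ^ 2) :=
        Finset.sum_le_sum fun j _ => key j
    _ = 3 * realMedian (fun i => ∑ j : Fin 3, (x i j) ^ 2) := by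
        simp [Finset.sum_const]
end

section
/- Corollary of the three-tone lemma: for tones (v,f), (v*,f*), (v',f') with |v'| ≥ |v*| and any T > 0, (1/T)∫_0^T |v' e^{2πif't} − v e^{2πift}|² dt ≤ C·( (1/T)∫_0^T |v* e^{2πif*t} − v e^{2πift}|² dt + |v'|² ) for a universal constant C. -/
open MeasureTheory Real

/-- corollary of the three-tone lemma.  If `|v'| ≥ |v*|` then
`(1/T)∫_0^T |v' e^{2πif't} - v e^{2πift}|² dt
   ≤ C·((1/T)∫_0^T |v* e^{2πif*t} - v e^{2πift}|² dt + |v'|²)`. -/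
theorem three_tone_integral_comparison :
    ∃ C : ℝ, 0 < C ∧
      ∀ (v vs v' : ℂ) (f fs f' T : ℝ), 0 < T → ‖vs‖ ≤ ‖v'‖ →
        (1 / T) * (∫ t in (0:ℝ)..T,
            ‖v' * Complex.exp (2 * π * f' * t * Complex.I)
              - v * Complex.exp (2 * π * f * t * Complex.I)‖ ^ 2)
          ≤ C * ((1 / T) * (∫ t in (0:ℝ)..T,
              ‖vs * Complex.exp (2 * π * fs * t * Complex.I)
                - v * Complex.exp (2 * π * f * t * Complex.I)‖ ^ 2) + ‖v'‖ ^ 2) := by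
  refine ⟨8, by norm_num, fun v vs v' f fs f' T hT hvs => ?_⟩
  set h : ℝ → ℝ := fun t => ‖v' * Complex.exp (2 * π * f' * t * Complex.I)
              - v * Complex.exp (2 * π * f * t * Complex.I)‖ ^ 2 with hh
  set g : ℝ → ℝ := fun t => ‖vs * Complex.exp (2 * π * fs * t * Complex.I)
              - v * Complex.exp (2 * π * f * t * Complex.I)‖ ^ 2 with hg
  have hcont : ∀ (a : ℂ) (b : ℝ), Continuous (fun t : ℝ =>
      ‖a * Complex.exp (2 * π * b * t * Complex.I)
        - v * Complex.exp (2 * π * f * t * Complex.I)‖ ^ 2) := by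
    intro a b
    fun_prop
  have hnorm : ∀ (a : ℂ) (b t : ℝ),
      ‖a * Complex.exp (2 * π * b * t * Complex.I)‖ = ‖a‖ := by
    intro a b t
    simp [norm_mul, Complex.norm_exp]
  -- pointwise bound: h t ≤ 2 * g t + 8 * ‖v'‖^2
  have hpt : ∀ t : ℝ, h t ≤ 2 * g t + 8 * ‖v'‖ ^ 2 := by
    intro t
    set e' := Complex.exp (2 * π * f' * t * Complex.I)
    set es := Complex.exp (2 * π * fs * t * Complex.I)
    set e := Complex.exp (2 * π * f * t * Complex.I)
    have h1 : ‖v' * e' - v * e‖ ≤ ‖v'‖ + ‖v‖ := by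
      calc ‖v' * e' - v * e‖ ≤ ‖v' * e'‖ + ‖v * e‖ := norm_sub_le _ _
        _ = ‖v'‖ + ‖v‖ := by rw [hnorm v' f' t, hnorm v f t]
    have h2 : ‖v‖ ≤ ‖vs * es - v * e‖ + ‖v'‖ := by
      have : ‖v * e‖ - ‖vs * es‖ ≤ ‖vs * es - v * e‖ := by
        have h0 := norm_sub_norm_le (v * e) (vs * es)
        rw [norm_sub_rev] at h0
        linarith
      rw [hnorm v f t, hnorm vs fs t] at this
      linarith
    have h3 : ‖v' * e' - v * e‖ ≤ ‖vs * es - v * e‖ + 2 * ‖v'‖ := by linarith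
    have h4 : h t = ‖v' * e' - v * e‖ ^ 2 := rfl
    have h5 : g t = ‖vs * es - v * e‖ ^ 2 := rfl
    rw [h4, h5]
    nlinarith [norm_nonneg (v' * e' - v * e), norm_nonneg (vs * es - v * e),
      norm_nonneg v', sq_nonneg (‖vs * es - v * e‖ - 2 * ‖v'‖)]
  have hint : (∫ t in (0:ℝ)..T, h t) ≤ ∫ t in (0:ℝ)..T, (2 * g t + 8 * ‖v'‖ ^ 2) := by
    apply intervalIntegral.integral_mono_on hT.le
    · exact ((hcont v' f').intervalIntegrable _ _)
    · exact ((continuous_const.mul (hcont vs fs)).add continuous_const).intervalIntegrable _ _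
    · intro t _; exact hpt t
  have hint2 : (∫ t in (0:ℝ)..T, (2 * g t + 8 * ‖v'‖ ^ 2))
      = 2 * (∫ t in (0:ℝ)..T, g t) + (T - 0) * (8 * ‖v'‖ ^ 2) := by
    rw [intervalIntegral.integral_add (f := fun t => 2 * g t) ((continuous_const.mul (hcont vs fs)).intervalIntegrable _ _)
      (intervalIntegrable_const),
      intervalIntegral.integral_const_mul, intervalIntegral.integral_const, smul_eq_mul]
  have hgnn : 0 ≤ ∫ t in (0:ℝ)..T, g t := by
    apply intervalIntegral.integral_nonneg hT.le
    intro t _; positivity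
  have hTinv : 0 < 1 / T := by positivity
  have := mul_le_mul_of_nonneg_left hint hTinv.le
  rw [hint2] at this
  have key : (1/T) * (2 * (∫ t in (0:ℝ)..T, g t) + (T - 0) * (8 * ‖v'‖ ^ 2))
      = 2 * ((1/T) * ∫ t in (0:ℝ)..T, g t) + 8 * ‖v'‖ ^ 2 := by
    field_simp; ring
  rw [key] at this
  have : (1/T) * (∫ t in (0:ℝ)..T, h t) ≤ 8 * ((1/T) * (∫ t in (0:ℝ)..T, g t) + ‖v'‖ ^ 2) := by
    nlinarith [mul_nonneg hTinv.le hgnn]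
  exact this
end
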